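/- Let T be an aperiodic homeomorphism of a Cantor set Ω. Then for every integer n ≥ 1, every ε > 0, and any finite list of Borel probability measures μ₁, …, μ_k on Ω, there exists a clopen set F ⊆ Ω such that the sets F, T(F), …, T^{n-1}(F) are pairwise disjoint and μᵢ(F ∪ T(F) ∪ ⋯ ∪ T^{n-1}(F)) > 1 − ε for every i = 1, …, k. -/

import Mathlib

open MeasureTheory Set Function
set_option linter.unusedSectionVars false
set_option maxHeartbeats 1000000

section RokhlinAux
variable {Ω : Type*} [TopologicalSpace Ω] [CompactSpace Ω]
    [TopologicalSpace.MetrizableSpace Ω] [TotallyDisconnectedSpace Ω]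
    (T : Ω ≃ₜ Ω)

local notation "f" => (T : Ω → Ω)
local notation "g" => (T.symm : Ω → Ω)

lemma gf_iter (m : ℕ) (x : Ω) : g^[m] (f^[m] x) = x :=
  (Function.LeftInverse.iterate T.symm_apply_apply m) x

lemma fg_iter (m : ℕ) (x : Ω) : f^[m] (g^[m] x) = x :=
  (Function.LeftInverse.iterate T.apply_symm_apply m) x

lemma g_f_le {i c : ℕ} (h : i ≤ c) (x : Ω) : g^[c] (f^[i] x) = g^[c - i] x := by
  conv_lhs => rw [show c = (c - i) + i by omega, Function.iterate_add_apply]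
  rw [gf_iter]

lemma g_f_ge {i c : ℕ} (h : c ≤ i) (x : Ω) : g^[c] (f^[i] x) = f^[i - c] x := by
  conv_lhs => rw [show i = c + (i - c) by omega, Function.iterate_add_apply]
  rw [gf_iter]

lemma f_g_le {i c : ℕ} (h : i ≤ c) (x : Ω) : f^[c] (g^[i] x) = f^[c - i] x := by
  conv_lhs => rw [show c = (c - i) + i by omega, Function.iterate_add_apply]
  rw [fg_iter]

lemma f_g_ge {i c : ℕ} (h : c ≤ i) (x : Ω) : f^[c] (g^[i] x) = g^[i - c] x := by
  conv_lhs => rw [show i = c + (i - c) by omega, Function.iterate_add_apply]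
  rw [fg_iter]

lemma iter_ne (hT : ∀ x : Ω, ∀ n : ℕ, 1 ≤ n → f^[n] x ≠ x)
    {i j : ℕ} (hij : i < j) (x : Ω) : f^[i] x ≠ f^[j] x := by
  intro h
  have : f^[j - i] (f^[i] x) = f^[i] x := by
    rw [← Function.iterate_add_apply, show j - i + i = j by omega, ← h]
  exact hT (f^[i] x) (j - i) (by omega) this

/-- local tower base -/
lemma local_base (hT : ∀ x : Ω, ∀ n : ℕ, 1 ≤ n → f^[n] x ≠ x) (N : ℕ) (x : Ω) :
    ∃ U : Set Ω, IsClopen U ∧ x ∈ U ∧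
      ∀ i ≤ N, ∀ j ≤ N, i ≠ j → ∀ y ∈ U, ∀ z ∈ U, f^[i] y ≠ f^[j] z := by
  have hfin : (Set.Finite ((fun i => f^[i] x) '' (Set.Iic N))) :=
    (Set.finite_Iic N).image _
  obtain ⟨V, hV, hVd⟩ := hfin.t2_separation
  have hinj : ∀ i ≤ N, ∀ j ≤ N, i ≠ j → f^[i] x ≠ f^[j] x := by
    intro i hi j hj hij
    rcases Nat.lt_or_ge i j with h | h
    · exact iter_ne T hT h x
    · exact fun hh => iter_ne T hT (by omega) x hh.symm
  set W : Set Ω := ⋂ i ∈ Finset.range (N + 1), f^[i] ⁻¹' (V (f^[i] x)) with hW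
  have hWopen : IsOpen W := by
    apply isOpen_biInter_finset
    intro i _
    exact ((hV _).2).preimage (T.continuous.iterate i)
  have hxW : x ∈ W := by
    simp only [hW, Set.mem_iInter, Set.mem_preimage]
    intro i _
    exact (hV (f^[i] x)).1
  obtain ⟨U, hUc, hxU, hUW⟩ := compact_exists_isClopen_in_isOpen hWopen hxW
  refine ⟨U, hUc, hxU, ?_⟩
  intro i hi j hj hij y hy z hz
  have h1 : f^[i] y ∈ V (f^[i] x) := by
    have := hUW hy
    simp only [hW, Set.mem_iInter, Set.mem_preimage] at this
    exact this i (Finset.mem_range.2 (by omega))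
  have h2 : f^[j] z ∈ V (f^[j] x) := by
    have := hUW hz
    simp only [hW, Set.mem_iInter, Set.mem_preimage] at this
    exact this j (Finset.mem_range.2 (by omega))
  have hd : Disjoint (V (f^[i] x)) (V (f^[j] x)) := by
    apply hVd (Set.mem_image_of_mem _ (Set.mem_Iic.2 hi))
      (Set.mem_image_of_mem _ (Set.mem_Iic.2 hj))
    exact hinj i hi j hj hij
  intro he
  exact (Set.disjoint_left.mp hd h1) (he ▸ h2)

lemma marker (hT : ∀ x : Ω, ∀ n : ℕ, 1 ≤ n → f^[n] x ≠ x) (N : ℕ) :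
    ∃ A : Set Ω, IsClopen A ∧
      (∀ m, 1 ≤ m → m ≤ N → ∀ x ∈ A, f^[m] x ∉ A) ∧
      (∀ x : Ω, ∃ j, 1 ≤ j ∧ j ≤ 2 * N + 1 ∧ f^[j] x ∈ A) := by
  choose U hUc hUx hUd using local_base T hT N
  obtain ⟨t, ht⟩ := isCompact_univ.elim_finite_subcover U (fun z => (hUc z).2)
    (fun x _ => Set.mem_iUnion.2 ⟨x, hUx x⟩)
  have key : ∀ s : Finset Ω, ∃ A : Set Ω, IsClopen A ∧
      (∀ m, 1 ≤ m → m ≤ N → ∀ x ∈ A, f^[m] x ∉ A) ∧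
      (∀ z ∈ s, ∀ x ∈ U z, ∃ c ≤ N, f^[c] x ∈ A ∨ g^[c] x ∈ A) := by
    intro s
    classical
    induction s using Finset.induction_on with
    | empty => exact ⟨∅, isClopen_empty, fun _ _ _ x hx => absurd hx (Set.notMem_empty x),
        fun z hz => absurd hz (Finset.notMem_empty z)⟩
    | insert z s hz ih =>
      obtain ⟨A, hAc, hAd, hAh⟩ := ih
      set R : Set Ω := ⋃ m ∈ Finset.range (N + 1), (f^[m] ⁻¹' A ∪ g^[m] ⁻¹' A) with hR
      have hRc : IsClopen R := by
        apply isClopen_biUnion_finset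
        intro m _
        exact (hAc.preimage (T.continuous.iterate m)).union
          (hAc.preimage (T.symm.continuous.iterate m))
      have hRmem : ∀ x : Ω, x ∈ R ↔ ∃ m ≤ N, f^[m] x ∈ A ∨ g^[m] x ∈ A := by
        intro x
        simp only [hR, Set.mem_iUnion, Finset.mem_range, Set.mem_union, Set.mem_preimage]
        constructor
        · rintro ⟨m, hm, h⟩; exact ⟨m, by omega, h⟩
        · rintro ⟨m, hm, h⟩; exact ⟨m, by omega, h⟩
      refine ⟨A ∪ (U z \ R), hAc.union ((hUc z).diff hRc), ?_, ?_⟩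
      · rintro m hm1 hmN x (hx | hx) (hfx | hfx)
        · exact hAd m hm1 hmN x hx hfx
        · exact hfx.2 ((hRmem _).2 ⟨m, hmN, Or.inr (by rw [gf_iter]; exact hx)⟩)
        · exact hx.2 ((hRmem _).2 ⟨m, hmN, Or.inl hfx⟩)
        · exact hUd z m hmN 0 (Nat.zero_le N) (by omega) x hx.1 (f^[m] x) hfx.1 rfl
      · intro z' hz' x hx
        rcases Finset.mem_insert.mp hz' with h | h
        · subst h
          by_cases hxR : x ∈ R
          · obtain ⟨m, hm, hor⟩ := (hRmem x).1 hxR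
            exact ⟨m, hm, hor.imp (fun h => Set.mem_union_left _ h) (fun h => Set.mem_union_left _ h)⟩
          · exact ⟨0, Nat.zero_le N, Or.inl (Or.inr ⟨hx, hxR⟩)⟩
        · obtain ⟨c, hc, hor⟩ := hAh z' h x hx
          exact ⟨c, hc, hor.imp (fun h => Set.mem_union_left _ h) (fun h => Set.mem_union_left _ h)⟩
  obtain ⟨A, hAc, hAd, hAh⟩ := key t
  refine ⟨A, hAc, hAd, ?_⟩
  intro x
  have hy : f^[N+1] x ∈ Set.univ := Set.mem_univ _
  obtain ⟨z, hzt, hyU⟩ : ∃ z ∈ t, f^[N+1] x ∈ U z := by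
    have := ht hy
    simpa using this
  obtain ⟨c, hc, hor⟩ := hAh z hzt _ hyU
  rcases hor with h | h
  · refine ⟨c + N + 1, by omega, by omega, ?_⟩
    rwa [show c + N + 1 = c + (N + 1) by omega, Function.iterate_add_apply]
  · refine ⟨N + 1 - c, by omega, by omega, ?_⟩
    rwa [g_f_ge T (by omega)] at h

lemma construct (B : Set Ω) (hBc : IsClopen B) (M n : ℕ) (hn : 1 ≤ n)
    (hit : ∀ x : Ω, ∃ j, 1 ≤ j ∧ j ≤ M ∧ f^[j] x ∈ B) :
    ∃ F : Set Ω, IsClopen F ∧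
      (∀ i j : ℕ, i < n → j < n → i ≠ j → Disjoint (f^[i] '' F) (f^[j] '' F)) ∧
      (∀ z : Ω, (∀ m, 1 ≤ m → m < n → f^[m] z ∉ B) →
        z ∈ ⋃ j ∈ Finset.range n, f^[j] '' F) := by
  classical
  set P : Ω → ℕ → Prop := fun x a => g^[a] x ∈ B ∧ ∀ c, c < a → g^[c] x ∉ B with hP
  have back : ∀ x : Ω, ∃ a, g^[a] x ∈ B ∧ a ≤ M := by
    intro x
    obtain ⟨j, hj1, hjM, hj⟩ := hit (g^[M] x)
    refine ⟨M - j, ?_, by omega⟩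
    rwa [f_g_ge T (by omega)] at hj
  have exP : ∀ x : Ω, ∃ a, a ≤ M ∧ P x a := by
    intro x
    obtain ⟨a, ha, haM⟩ := back x
    have hex : ∃ a, g^[a] x ∈ B := ⟨a, ha⟩
    refine ⟨Nat.find hex, le_trans (Nat.find_min' hex ha) haM,
      Nat.find_spec hex, fun c hc => Nat.find_min hex hc⟩
  have uniqP : ∀ x a b, P x a → P x b → a = b := by
    intro x a b hpa hpb
    rcases Nat.lt_trichotomy a b with h | h | h
    · exact absurd hpa.1 (hpb.2 a h)
    · exact h
    · exact absurd hpb.1 (hpa.2 b h)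
  set F : Set Ω := {x | (∃ a, a ≤ M ∧ n ∣ a ∧ P x a) ∧
      ∀ j, 1 ≤ j → j < n → f^[j] x ∉ B} with hF
  have hFc : IsClopen F := by
    have : F = (⋃ a ∈ (Finset.range (M + 1)).filter (n ∣ ·),
        (g^[a] ⁻¹' B ∩ ⋂ c ∈ Finset.range a, (g^[c] ⁻¹' B)ᶜ)) ∩
        ⋂ j ∈ Finset.Ico 1 n, (f^[j] ⁻¹' B)ᶜ := by
      ext x
      simp only [hF, Set.mem_setOf_eq, Set.mem_inter_iff, Set.mem_iUnion,
        Finset.mem_filter, Finset.mem_range, Set.mem_preimage, Set.mem_iInter,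
        Set.mem_compl_iff, Finset.mem_Ico, exists_prop, hP]
      constructor
      · rintro ⟨⟨a, haM, hna, hB, hmin⟩, hno⟩
        exact ⟨⟨a, ⟨by omega, hna⟩, hB, fun c hc => hmin c hc⟩,
          fun j hj => hno j hj.1 hj.2⟩
      · rintro ⟨⟨a, ⟨haM, hna⟩, hB, hmin⟩, hno⟩
        exact ⟨⟨a, by omega, hna, hB, fun c hc => hmin c hc⟩,
          fun j hj1 hjn => hno j ⟨hj1, hjn⟩⟩
    rw [this]
    refine IsClopen.inter ?_ ?_
    · apply isClopen_biUnion_finset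
      intro a _
      refine (hBc.preimage (T.symm.continuous.iterate a)).inter ?_
      apply isClopen_biInter_finset
      intro c _
      exact (hBc.preimage (T.symm.continuous.iterate c)).compl
    · apply isClopen_biInter_finset
      intro j _
      exact (hBc.preimage (T.continuous.iterate j)).compl
  have shift : ∀ x ∈ F, ∀ a, P x a → ∀ i, i < n → P (f^[i] x) (a + i) := by
    intro x hxF a hpa i hin
    constructor
    · rw [g_f_le T (by omega), show a + i - i = a by omega]
      exact hpa.1
    · intro c hc
      rcases Nat.lt_trichotomy c i with h | h | h
      · rw [g_f_ge T (by omega)]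
        exact hxF.2 (i - c) (by omega) (by omega)
      · subst h
        rw [g_f_ge T le_rfl, Nat.sub_self, Function.iterate_zero_apply]
        exact hpa.2 0 (by omega)
      · rw [g_f_le T (by omega)]
        exact hpa.2 (c - i) (by omega)
  refine ⟨F, hFc, ?_, ?_⟩
  · intro i j hi hj hij
    rw [Set.disjoint_left]
    rintro z ⟨x, hxF, rfl⟩ ⟨y, hyF, hey⟩
    obtain ⟨a, haM, hna, hpa⟩ := hxF.1
    obtain ⟨b, hbM, hnb, hpb⟩ := hyF.1
    have h1 : P (f^[i] x) (a + i) := shift x hxF a hpa i hi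
    have h2 : P (f^[i] x) (b + j) := hey ▸ shift y hyF b hpb j hj
    have heq : a + i = b + j := uniqP _ _ _ h1 h2
    obtain ⟨p, rfl⟩ := hna
    obtain ⟨q, rfl⟩ := hnb
    apply hij
    have : (n * p + i) % n = (n * q + j) % n := by rw [heq]
    rwa [Nat.mul_add_mod, Nat.mul_add_mod, Nat.mod_eq_of_lt hi, Nat.mod_eq_of_lt hj] at this
  · intro z hz
    obtain ⟨a, haM, hpa⟩ := exP z
    set i := a % n with hi
    have hin : i < n := Nat.mod_lt _ (by omega)
    have hia : i ≤ a := Nat.mod_le a n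
    set x := g^[i] z with hx
    have hfix : f^[i] x = z := fg_iter T i z
    have key := Nat.mod_add_div a n
    have hpx : P x (a - i) := by
      constructor
      · rw [hx, ← Function.iterate_add_apply, show a - i + i = a by omega]
        exact hpa.1
      · intro c hc
        rw [hx, ← Function.iterate_add_apply]
        exact hpa.2 (c + i) (by omega)
    have hxF : x ∈ F := by
      refine ⟨⟨a - i, by omega, ⟨a / n, by omega⟩, hpx⟩, ?_⟩
      intro j hj1 hjn
      rcases Nat.lt_trichotomy j i with h | h | h
      · rw [hx, f_g_ge T (by omega)]
        exact hpa.2 (i - j) (by omega)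
      · subst h
        rw [hx, fg_iter]
        have : 0 < a := by omega
        exact hpa.2 0 this
      · rw [hx, f_g_le T (by omega)]
        exact hz (j - i) (by omega) (by omega)
    simp only [Set.mem_iUnion, Finset.mem_range, exists_prop]
    exact ⟨i, hin, x, hxF, hfix⟩

end RokhlinAux

open scoped ENNReal
theorem stmt_14 {Ω : Type*} [TopologicalSpace Ω] [CompactSpace Ω]
    [TopologicalSpace.MetrizableSpace Ω] [TotallyDisconnectedSpace Ω] [PerfectSpace Ω]
    [Nonempty Ω] [MeasurableSpace Ω] [BorelSpace Ω]
    (T : Ω ≃ₜ Ω)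
    (hT : ∀ x : Ω, ∀ n : ℕ, 1 ≤ n → (T : Ω → Ω)^[n] x ≠ x)
    (n : ℕ) (hn : 1 ≤ n) (ε : ℝ) (hε : 0 < ε)
    (k : ℕ) (μ : Fin k → Measure Ω) (hμ : ∀ i, IsProbabilityMeasure (μ i)) :
    ∃ F : Set Ω, IsClopen F ∧
      (∀ i j : ℕ, i < n → j < n → i ≠ j →
        Disjoint ((T : Ω → Ω)^[i] '' F) ((T : Ω → Ω)^[j] '' F)) ∧
      (∀ i : Fin k,
        1 - ENNReal.ofReal ε < μ i (⋃ j ∈ Finset.range n, (T : Ω → Ω)^[j] '' F)) := by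
  classical
  set f : Ω → Ω := (T : Ω → Ω) with hf
  set g : Ω → Ω := (T.symm : Ω → Ω) with hg
  -- numerics
  set δ : ℝ := min ε 1 with hδdef
  have hδ : 0 < δ := lt_min hε one_pos
  have hδε : δ ≤ ε := min_le_left _ _
  have hδ1 : δ ≤ 1 := min_le_right _ _
  set L : ℕ := ⌈(k : ℝ) / δ⌉₊ + 1 with hLdef
  have hL1 : 1 ≤ L := by omega
  have hkL : (k : ℝ) < (L : ℝ) * δ := by
    have h1 : (k : ℝ) / δ < (L : ℝ) := by
      have := Nat.le_ceil ((k : ℝ) / δ)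
      push_cast [hLdef]
      linarith
    calc (k : ℝ) = (k : ℝ) / δ * δ := by field_simp
    _ < (L : ℝ) * δ := by
      exact mul_lt_mul_of_pos_right h1 hδ
  set N : ℕ := L * n with hNdef
  have hN1 : 1 ≤ N := by
    calc 1 = 1 * 1 := rfl
    _ ≤ L * n := Nat.mul_le_mul hL1 hn
  -- marker
  obtain ⟨A, hAc, hAd, hAh⟩ := marker T hT N
  have hAmeas : ∀ j : ℕ, MeasurableSet (f^[j] ⁻¹' A) := fun j =>
    ((hAc.preimage (T.continuous.iterate j)).2).measurableSet
  -- disjointness of preimages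
  have hdisj : ∀ j1 j2 : ℕ, j1 < j2 → j2 - j1 ≤ N →
      Disjoint (f^[j1] ⁻¹' A) (f^[j2] ⁻¹' A) := by
    intro j1 j2 h12 hN'
    rw [Set.disjoint_left]
    intro x hx1 hx2
    apply hAd (j2 - j1) (by omega) hN' (f^[j1] x) hx1
    rwa [← Function.iterate_add_apply, show j2 - j1 + j1 = j2 by omega]
  -- per-measure total bound
  have hsum1 : ∀ i : Fin k,
      ∑ j ∈ Finset.Ico 1 (L * n), μ i (f^[j] ⁻¹' A) ≤ 1 := by
    intro i
    haveI := hμ i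
    have hpd : (↑(Finset.Ico 1 (L * n)) : Set ℕ).PairwiseDisjoint
        (fun j => f^[j] ⁻¹' A) := by
      intro a ha b hb hab
      simp only [Finset.coe_Ico, Set.mem_Ico] at ha hb
      rcases Nat.lt_or_ge a b with h | h
      · exact hdisj a b h (by omega)
      · exact (hdisj b a (by omega) (by omega)).symm
    rw [← measure_biUnion_finset hpd (fun j _ => hAmeas j)]
    exact prob_le_one
  -- pigeonhole over shifts
  have hpigeon : ∃ s, s < L ∧
      ∑ i : Fin k, ∑ m ∈ Finset.Ico 1 n, μ i (f^[s * n + m] ⁻¹' A)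
        < ENNReal.ofReal δ := by
    by_contra hcon
    push_neg at hcon
    have hlow : (L : ℝ≥0∞) * ENNReal.ofReal δ ≤
        ∑ s ∈ Finset.range L, ∑ i : Fin k,
          ∑ m ∈ Finset.Ico 1 n, μ i (f^[s * n + m] ⁻¹' A) := by
      have := Finset.card_nsmul_le_sum (Finset.range L)
        (fun s => ∑ i : Fin k, ∑ m ∈ Finset.Ico 1 n, μ i (f^[s * n + m] ⁻¹' A))
        (ENNReal.ofReal δ)
        (fun s hs => hcon s (Finset.mem_range.mp hs))
      simpa [nsmul_eq_mul] using this
    have hup : ∑ s ∈ Finset.range L, ∑ i : Fin k,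
        ∑ m ∈ Finset.Ico 1 n, μ i (f^[s * n + m] ⁻¹' A) ≤ (k : ℝ≥0∞) := by
      rw [Finset.sum_comm]
      calc ∑ i : Fin k, ∑ s ∈ Finset.range L,
            ∑ m ∈ Finset.Ico 1 n, μ i (f^[s * n + m] ⁻¹' A)
          ≤ ∑ _i : Fin k, (1 : ℝ≥0∞) := by
            apply Finset.sum_le_sum
            intro i _
            have hre : ∑ s ∈ Finset.range L, ∑ m ∈ Finset.Ico 1 n,
                μ i (f^[s * n + m] ⁻¹' A) =
                ∑ p ∈ (Finset.range L) ×ˢ (Finset.Ico 1 n),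
                  μ i (f^[p.1 * n + p.2] ⁻¹' A) := by
              rw [Finset.sum_product]
            rw [hre]
            have hinj : ∀ p ∈ (Finset.range L) ×ˢ (Finset.Ico 1 n),
                ∀ q ∈ (Finset.range L) ×ˢ (Finset.Ico 1 n),
                (fun p : ℕ × ℕ => p.1 * n + p.2) p =
                  (fun p : ℕ × ℕ => p.1 * n + p.2) q → p = q := by
              rintro ⟨s1, m1⟩ hp ⟨s2, m2⟩ hq he
              simp only [Finset.mem_product, Finset.mem_range, Finset.mem_Ico] at hp hq
              simp only at he
              have hs : s1 = s2 := by
                by_contra hne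
                rcases Nat.lt_or_ge s1 s2 with h | h
                · have : s1 * n + m1 < s2 * n + m2 := by
                    calc s1 * n + m1 < s1 * n + n := by omega
                    _ = (s1 + 1) * n := by ring
                    _ ≤ s2 * n := Nat.mul_le_mul_right n (by omega)
                    _ ≤ s2 * n + m2 := by omega
                  omega
                · have hlt : s2 < s1 := by omega
                  have : s2 * n + m2 < s1 * n + m1 := by
                    calc s2 * n + m2 < s2 * n + n := by omega
                    _ = (s2 + 1) * n := by ring
                    _ ≤ s1 * n := Nat.mul_le_mul_right n (by omega)
                    _ ≤ s1 * n + m1 := by omega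
                  omega
              subst hs
              have : m1 = m2 := by omega
              subst this
              rfl
            have himg := Finset.sum_image (g := fun p : ℕ × ℕ => p.1 * n + p.2)
              (f := fun j => μ i ((T : Ω → Ω)^[j] ⁻¹' A)) hinj
            rw [show ∑ p ∈ Finset.range L ×ˢ Finset.Ico 1 n,
                μ i (f^[p.1 * n + p.2] ⁻¹' A) =
                ∑ j ∈ (Finset.range L ×ˢ Finset.Ico 1 n).image
                  (fun p : ℕ × ℕ => p.1 * n + p.2), μ i (f^[j] ⁻¹' A) from himg.symm]
            refine le_trans (Finset.sum_le_sum_of_subset ?_) (hsum1 i)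
            intro j hj
            simp only [Finset.mem_image, Finset.mem_product, Finset.mem_range,
              Finset.mem_Ico] at hj
            obtain ⟨⟨s, m⟩, ⟨⟨hsL, hm1, hmn⟩, rfl⟩⟩ := hj
            simp only [Finset.mem_Ico]
            constructor
            · omega
            · calc s * n + m < s * n + n := by omega
              _ = (s + 1) * n := by ring
              _ ≤ L * n := Nat.mul_le_mul_right n (by omega)
        _ = (k : ℝ≥0∞) := by simp
    have hklt : (k : ℝ≥0∞) < (L : ℝ≥0∞) * ENNReal.ofReal δ := by
      have : ((k : ℝ≥0∞)) = ENNReal.ofReal (k : ℝ) := by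
        rw [ENNReal.ofReal_natCast]
      rw [this, show ((L : ℝ≥0∞)) = ENNReal.ofReal (L : ℝ) by rw [ENNReal.ofReal_natCast],
        ← ENNReal.ofReal_mul (by positivity)]
      exact ENNReal.ofReal_lt_ofReal_iff (by positivity) |>.mpr hkL
    exact absurd (le_trans hlow hup) (not_le.mpr hklt)
  obtain ⟨s, hsL, hslt⟩ := hpigeon
  -- the shifted section
  set B : Set Ω := f^[s * n] ⁻¹' A with hB
  have hBc : IsClopen B := hAc.preimage (T.continuous.iterate _)
  have hBmem : ∀ (j : ℕ) (x : Ω), f^[j] x ∈ B ↔ f^[s * n + j] x ∈ A := by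
    intro j x
    rw [hB, Set.mem_preimage, ← Function.iterate_add_apply]
  have hhit : ∀ x : Ω, ∃ j, 1 ≤ j ∧ j ≤ 2 * N + 1 ∧ f^[j] x ∈ B := by
    intro x
    obtain ⟨j, hj1, hjN, hj⟩ := hAh (f^[s * n] x)
    refine ⟨j, hj1, hjN, ?_⟩
    rw [hBmem]
    rwa [← Function.iterate_add_apply, Nat.add_comm] at hj
  obtain ⟨F, hFc, hFd, hFcov⟩ := construct T B hBc (2 * N + 1) n hn hhit
  refine ⟨F, hFc, hFd, ?_⟩
  intro i
  haveI := hμ i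
  set U : Set Ω := ⋃ j ∈ Finset.range n, f^[j] '' F with hU
  have hUmeas : MeasurableSet U := by
    apply Finset.measurableSet_biUnion
    intro j _
    have himg : f^[j] '' F = g^[j] ⁻¹' F :=
      congrFun (Set.image_eq_preimage_of_inverse
        (Function.LeftInverse.iterate T.symm_apply_apply j)
        (Function.LeftInverse.iterate T.apply_symm_apply j)) F
    rw [himg]
    exact ((hFc.preimage (T.symm.continuous.iterate j)).2).measurableSet
  have hsub : Uᶜ ⊆ ⋃ m ∈ Finset.Ico 1 n, f^[m] ⁻¹' B := by
    intro z hz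
    by_contra hzc
    apply hz
    apply hFcov
    intro m hm1 hmn hmB
    apply hzc
    simp only [Set.mem_iUnion, Finset.mem_Ico, exists_prop]
    exact ⟨m, ⟨hm1, hmn⟩, hmB⟩
  have hUc_lt : μ i Uᶜ < ENNReal.ofReal δ := by
    have h1 : μ i Uᶜ ≤ ∑ m ∈ Finset.Ico 1 n, μ i (f^[m] ⁻¹' B) :=
      le_trans (measure_mono hsub) (measure_biUnion_finset_le _ _)
    have h2 : ∀ m : ℕ, f^[m] ⁻¹' B = f^[s * n + m] ⁻¹' A := by
      intro m
      ext x
      simpa only [Set.mem_preimage] using hBmem m x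
    calc μ i Uᶜ ≤ ∑ m ∈ Finset.Ico 1 n, μ i (f^[m] ⁻¹' B) := h1
    _ = ∑ m ∈ Finset.Ico 1 n, μ i (f^[s * n + m] ⁻¹' A) := by
        apply Finset.sum_congr rfl
        intro m _
        rw [h2]
    _ ≤ ∑ i' : Fin k, ∑ m ∈ Finset.Ico 1 n, μ i' (f^[s * n + m] ⁻¹' A) :=
        Finset.single_le_sum
          (f := fun i' : Fin k => ∑ m ∈ Finset.Ico 1 n, μ i' (f^[s * n + m] ⁻¹' A))
          (fun _ _ => zero_le) (Finset.mem_univ i)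
    _ < ENNReal.ofReal δ := hslt
  have h1 : μ i U + μ i Uᶜ = 1 := by
    rw [measure_add_measure_compl hUmeas, measure_univ]
  rcases le_or_gt (ENNReal.ofReal ε) 1 with hle | hlt
  · apply ENNReal.sub_lt_of_lt_add hle
    calc (1 : ℝ≥0∞) = μ i U + μ i Uᶜ := h1.symm
    _ < μ i U + ENNReal.ofReal ε :=
        ENNReal.add_lt_add_of_le_of_lt (measure_ne_top _ _) le_rfl
          (lt_of_lt_of_le hUc_lt (ENNReal.ofReal_le_ofReal hδε))
  · rw [tsub_eq_zero_of_le hlt.le]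
    rw [pos_iff_ne_zero]
    intro h0
    rw [h0, zero_add] at h1
    have hlt1 : μ i Uᶜ < 1 := by
      refine lt_of_lt_of_le hUc_lt ?_
      rw [← ENNReal.ofReal_one]
      exact ENNReal.ofReal_le_ofReal hδ1
    exact hlt1.ne h1
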